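/- Let μ be a probability measure on ℝ, a ∈ ℝ, and let γ > 0, σ > 0 and x₁ ≥ 0 be constants such that for every x₀ > 0, μ({x : |x − a| ≥ x₀}) ≤ min(1, exp(−x₀^γ/σ + x₁)). Then for every integer k ≥ 1, ∫ |x − a|^k dμ(x) ≤ (2σx₁)^{k/γ} + (k/γ)·(2σ)^{k/γ}·Γ(k/γ), where Γ is the gamma function. -/

import Mathlib

open MeasureTheory Set

lemma aux_integrableOn {γ b : ℝ} (q : ℝ) (hγ : 0 < γ) (hq : -1 < q) (hb : 0 < b) :
    IntegrableOn (fun t : ℝ => t ^ q * Real.exp (-b * t ^ γ)) (Set.Ioi 0) := by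
  have hs : (-1 : ℝ) < (q + 1) / γ - 1 := by
    have : 0 < (q + 1) / γ := div_pos (by linarith) hγ
    linarith
  have h1 : IntegrableOn (fun u : ℝ => u ^ ((q + 1) / γ - 1) * Real.exp (-b * u)) (Ioi 0) := by
    have := integrableOn_rpow_mul_exp_neg_mul_rpow (s := (q + 1) / γ - 1) (p := 1) hs zero_lt_one hb
    simpa [Real.rpow_one] using this
  rw [← integrableOn_Ioi_comp_rpow_iff' _ hγ.ne'] at h1
  refine h1.congr_fun (fun x hx => ?_) measurableSet_Ioi
  have hx0 : (0 : ℝ) < x := hx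
  dsimp only
  rw [smul_eq_mul, ← Real.rpow_mul hx0.le, ← mul_assoc, ← Real.rpow_add hx0,
    show γ - 1 + γ * ((q + 1) / γ - 1) = q by field_simp; ring]

/-- Lemma 2 of the supplement: a stretched-exponential tail bound
`μ(|x-a| ≥ x₀) ≤ min(1, exp(-x₀^γ/σ + x₁))` implies explicit bounds on all absolute
moments, `∫ |x-a|^k dμ ≤ (2σx₁)^{k/γ} + (k/γ)(2σ)^{k/γ} Γ(k/γ)`. -/
theorem moments_from_tail_bound
    (μ : Measure ℝ) [IsProbabilityMeasure μ]
    (a γ σ x₁ : ℝ) (hγ : 0 < γ) (hσ : 0 < σ) (hx₁ : 0 ≤ x₁)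
    (htail : ∀ x₀ : ℝ, 0 < x₀ →
      (μ {x | x₀ ≤ |x - a|}).toReal ≤ min 1 (Real.exp (-(x₀ ^ γ) / σ + x₁))) :
    ∀ k : ℕ, 1 ≤ k →
      ∫⁻ x, ENNReal.ofReal (|x - a| ^ k) ∂μ
        ≤ ENNReal.ofReal
            ((2 * σ * x₁) ^ ((k : ℝ) / γ)
              + ((k : ℝ) / γ) * (2 * σ) ^ ((k : ℝ) / γ) * Real.Gamma ((k : ℝ) / γ)) := by
  intro k hk
  have hp : (1 : ℝ) ≤ (k : ℝ) := by exact_mod_cast hk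
  have hp0 : (0 : ℝ) < (k : ℝ) := by linarith
  set p : ℝ := (k : ℝ) with hpdef
  -- layer cake
  have f_mble : AEMeasurable (fun x : ℝ => |x - a|) μ :=
    ((measurable_id.sub measurable_const).abs).aemeasurable
  have key := lintegral_rpow_eq_lintegral_meas_le_mul μ (f := fun x : ℝ => |x - a|)
    (Filter.Eventually.of_forall fun x => abs_nonneg _) f_mble hp0
  have hcast : ∀ x : ℝ, |x - a| ^ k = |x - a| ^ p := fun x => (Real.rpow_natCast _ _).symm
  simp only [hcast]
  rw [key]
  -- the real dominating function
  set h : ℝ → ℝ := fun t => min 1 (Real.exp (-(t ^ γ) / σ + x₁)) * t ^ (p - 1) with hhdef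
  have h_nn : ∀ t : ℝ, t ∈ Ioi (0 : ℝ) → 0 ≤ h t := by
    intro t ht
    exact mul_nonneg (le_min zero_le_one (Real.exp_pos _).le) (Real.rpow_nonneg ht.le _)
  -- integrability of h
  have haux2σ : IntegrableOn (fun t : ℝ => t ^ (p - 1) * Real.exp (-(1 / (2 * σ)) * t ^ γ))
      (Ioi 0) := aux_integrableOn (p - 1) hγ (by linarith) (by positivity)
  have hint : IntegrableOn h (Ioi 0) := by
    have hg : IntegrableOn
        (fun t : ℝ => Real.exp x₁ * (t ^ (p - 1) * Real.exp (-(1 / σ) * t ^ γ))) (Ioi 0) :=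
      (aux_integrableOn (p - 1) hγ (by linarith) (by positivity)).const_mul _
    refine hg.mono' ?_ ?_
    · apply Measurable.aestronglyMeasurable
      apply Measurable.mul
      · exact measurable_const.min
          (((((measurable_id.pow_const γ)).neg.div_const σ).add_const x₁).exp)
      · exact measurable_id.pow_const (p - 1)
    · filter_upwards [self_mem_ae_restrict (measurableSet_Ioi : MeasurableSet (Ioi (0:ℝ)))]
        with t ht
      rw [Real.norm_of_nonneg (h_nn t ht)]
      have he : Real.exp (-(t ^ γ) / σ + x₁) = Real.exp x₁ * Real.exp (-(1 / σ) * t ^ γ) := by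
        rw [← Real.exp_add]; ring_nf
      calc h t ≤ Real.exp (-(t ^ γ) / σ + x₁) * t ^ (p - 1) :=
            mul_le_mul_of_nonneg_right (min_le_right _ _) (Real.rpow_nonneg ht.le _)
        _ = Real.exp x₁ * (t ^ (p - 1) * Real.exp (-(1 / σ) * t ^ γ)) := by rw [he]; ring
  -- bound the tail measure
  have step1 : ∫⁻ t in Ioi 0, μ {x | t ≤ |x - a|} * ENNReal.ofReal (t ^ (p - 1))
      ≤ ∫⁻ t in Ioi 0, ENNReal.ofReal (h t) := by
    refine lintegral_mono_ae ?_
    filter_upwards [self_mem_ae_restrict (measurableSet_Ioi : MeasurableSet (Ioi (0:ℝ)))]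
      with t ht
    have hμ : μ {x | t ≤ |x - a|} ≤ ENNReal.ofReal (min 1 (Real.exp (-(t ^ γ) / σ + x₁))) := by
      calc μ {x | t ≤ |x - a|} = ENNReal.ofReal ((μ {x | t ≤ |x - a|}).toReal) :=
            (ENNReal.ofReal_toReal (measure_ne_top μ _)).symm
        _ ≤ _ := ENNReal.ofReal_le_ofReal (htail t ht)
    calc μ {x | t ≤ |x - a|} * ENNReal.ofReal (t ^ (p - 1))
        ≤ ENNReal.ofReal (min 1 (Real.exp (-(t ^ γ) / σ + x₁))) * ENNReal.ofReal (t ^ (p - 1)) :=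
          mul_le_mul_left hμ _
      _ = ENNReal.ofReal (h t) :=
          (ENNReal.ofReal_mul (le_min zero_le_one (Real.exp_pos _).le)).symm
  -- convert to a real integral
  have step2 : ∫⁻ t in Ioi 0, ENNReal.ofReal (h t) = ENNReal.ofReal (∫ t in Ioi 0, h t) := by
    rw [← ofReal_integral_eq_lintegral_ofReal hint]
    filter_upwards [self_mem_ae_restrict (measurableSet_Ioi : MeasurableSet (Ioi (0:ℝ)))]
      with t ht using h_nn t ht
  -- the threshold
  set t₀ : ℝ := (2 * σ * x₁) ^ (1 / γ) with ht₀def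
  have ht₀ : 0 ≤ t₀ := Real.rpow_nonneg (by positivity) _
  have ht₀γ : t₀ ^ γ = 2 * σ * x₁ := by
    rw [ht₀def, ← Real.rpow_mul (by positivity), one_div,
      inv_mul_cancel₀ hγ.ne', Real.rpow_one]
  -- split the real integral
  have hsplit : ∫ t in Ioi 0, h t = (∫ t in Ioc 0 t₀, h t) + ∫ t in Ioi t₀, h t := by
    rw [← setIntegral_union (Set.Ioc_disjoint_Ioi le_rfl) measurableSet_Ioi
      (hint.mono_set Ioc_subset_Ioi_self) (hint.mono_set (Ioi_subset_Ioi ht₀)),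
      Set.Ioc_union_Ioi_eq_Ioi ht₀]
  -- first piece
  have hrint : IntegrableOn (fun t : ℝ => t ^ (p - 1)) (Ioc 0 t₀) :=
    (intervalIntegrable_iff_integrableOn_Ioc_of_le ht₀).mp
      (intervalIntegral.intervalIntegrable_rpow' (by linarith))
  have hb1 : ∫ t in Ioc 0 t₀, h t ≤ t₀ ^ p / p := by
    have h1 : ∫ t in Ioc 0 t₀, h t ≤ ∫ t in Ioc 0 t₀, t ^ (p - 1) := by
      refine setIntegral_mono_on (hint.mono_set Ioc_subset_Ioi_self) hrint measurableSet_Ioc ?_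
      intro t ht
      exact mul_le_of_le_one_left (Real.rpow_nonneg ht.1.le _) (min_le_left _ _)
    have h2 : ∫ t in Ioc 0 t₀, t ^ (p - 1) = t₀ ^ p / p := by
      rw [← intervalIntegral.integral_of_le ht₀, integral_rpow (Or.inl (by linarith)),
        sub_add_cancel, Real.zero_rpow hp0.ne', sub_zero]
    linarith
  -- second piece
  have hb2 : ∫ t in Ioi t₀, h t ≤ (2 * σ) ^ (p / γ) * (1 / γ) * Real.Gamma (p / γ) := by
    have h1 : ∫ t in Ioi t₀, h t
        ≤ ∫ t in Ioi t₀, t ^ (p - 1) * Real.exp (-(1 / (2 * σ)) * t ^ γ) := by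
      refine setIntegral_mono_on (hint.mono_set (Ioi_subset_Ioi ht₀))
        (haux2σ.mono_set (Ioi_subset_Ioi ht₀)) measurableSet_Ioi ?_
      intro t ht
      have ht0 : (0 : ℝ) < t := lt_of_le_of_lt ht₀ ht
      have htγ : 2 * σ * x₁ ≤ t ^ γ := by
        rw [← ht₀γ]; exact Real.rpow_le_rpow ht₀ (le_of_lt ht) hγ.le
      have hexp : Real.exp (-(t ^ γ) / σ + x₁) ≤ Real.exp (-(1 / (2 * σ)) * t ^ γ) := by
        apply Real.exp_le_exp.mpr
        have h2σ : (0 : ℝ) < 2 * σ := by positivity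
        have hx : x₁ ≤ t ^ γ / (2 * σ) := (le_div_iff₀ h2σ).mpr (by linarith)
        have he : -(t ^ γ) / σ + x₁ - (-(1 / (2 * σ)) * t ^ γ) = x₁ - t ^ γ / (2 * σ) := by
          field_simp; ring
        linarith [he]
      calc h t ≤ Real.exp (-(t ^ γ) / σ + x₁) * t ^ (p - 1) :=
            mul_le_mul_of_nonneg_right (min_le_right _ _) (Real.rpow_nonneg ht0.le _)
        _ ≤ Real.exp (-(1 / (2 * σ)) * t ^ γ) * t ^ (p - 1) :=
            mul_le_mul_of_nonneg_right hexp (Real.rpow_nonneg ht0.le _)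
        _ = t ^ (p - 1) * Real.exp (-(1 / (2 * σ)) * t ^ γ) := mul_comm _ _
    have h2 : ∫ t in Ioi t₀, t ^ (p - 1) * Real.exp (-(1 / (2 * σ)) * t ^ γ)
        ≤ ∫ t in Ioi 0, t ^ (p - 1) * Real.exp (-(1 / (2 * σ)) * t ^ γ) := by
      refine setIntegral_mono_set haux2σ ?_ (HasSubset.Subset.eventuallyLE (Ioi_subset_Ioi ht₀))
      filter_upwards [self_mem_ae_restrict (measurableSet_Ioi : MeasurableSet (Ioi (0:ℝ)))]
        with t ht
      exact mul_nonneg (Real.rpow_nonneg ht.le _) (Real.exp_pos _).le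
    have h3 : ∫ t in Ioi 0, t ^ (p - 1) * Real.exp (-(1 / (2 * σ)) * t ^ γ)
        = (2 * σ) ^ (p / γ) * (1 / γ) * Real.Gamma (p / γ) := by
      rw [integral_rpow_mul_exp_neg_mul_rpow hγ (by linarith) (by positivity),
        sub_add_cancel]
      congr 2
      rw [one_div, Real.inv_rpow (by positivity), neg_div, Real.rpow_neg (by positivity),
        inv_inv]
    linarith
  -- put everything together
  calc ENNReal.ofReal p * ∫⁻ t in Ioi 0, μ {x | t ≤ |x - a|} * ENNReal.ofReal (t ^ (p - 1))
      ≤ ENNReal.ofReal p * ENNReal.ofReal (∫ t in Ioi 0, h t) := by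
        rw [← step2]; exact mul_le_mul_right step1 _
    _ = ENNReal.ofReal (p * ∫ t in Ioi 0, h t) := (ENNReal.ofReal_mul hp0.le).symm
    _ ≤ _ := by
        apply ENNReal.ofReal_le_ofReal
        have ht₀p : t₀ ^ p = (2 * σ * x₁) ^ (p / γ) := by
          rw [ht₀def, ← Real.rpow_mul (by positivity)]
          congr 1
          field_simp
        have : p * ∫ t in Ioi 0, h t
            ≤ p * (t₀ ^ p / p) + p * ((2 * σ) ^ (p / γ) * (1 / γ) * Real.Gamma (p / γ)) := by
          rw [hsplit, mul_add]
          have hI1 := mul_le_mul_of_nonneg_left hb1 hp0.le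
          have hI2 := mul_le_mul_of_nonneg_left hb2 hp0.le
          linarith
        calc p * ∫ t in Ioi 0, h t
            ≤ p * (t₀ ^ p / p) + p * ((2 * σ) ^ (p / γ) * (1 / γ) * Real.Gamma (p / γ)) := this
          _ = (2 * σ * x₁) ^ (p / γ) + p / γ * (2 * σ) ^ (p / γ) * Real.Gamma (p / γ) := by
              rw [mul_div_cancel₀ _ hp0.ne', ht₀p]; ring
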